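/- Let n ≥ 1, μ ∈ {1,…,n} and ω ∈ ℝ, and set σ_0 = ω, σ_μ = σ_{−μ} = 1, σ_k = 0 for every other integer k with −(n−1) ≤ k ≤ n. If complex numbers X_1,…,X_n and pairwise distinct complex numbers z_1,…,z_n with |z_j| = 1 satisfy ∑_{j=1}^n X_j z_j^l = σ_l for every integer l with −(n−1) ≤ l ≤ n, then every X_j is real. -/

import Mathlib

/-- in the full moment system with pairwise distinct unimodular nodes, the
amplitudes X_j are automatically real. -/
theorem stmt3 (n : ℕ) (hn : 1 ≤ n) (μ : ℕ) (hμ : μ ∈ Finset.Icc 1 n) (ω : ℝ)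
    (X : Fin n → ℂ) (z : Fin n → ℂ)
    (hz : Function.Injective z) (habs : ∀ j, ‖z j‖ = 1)
    (hmom : ∀ l : ℤ, -((n : ℤ) - 1) ≤ l → l ≤ n →
      ∑ j : Fin n, X j * z j ^ l =
        if l = 0 then (ω : ℂ) else if l = μ ∨ l = -(μ : ℤ) then 1 else 0) :
    ∀ j, (X j).im = 0 := by
  obtain ⟨hμ1, hμn⟩ := Finset.mem_Icc.mp hμ
  have hconj : ∀ j, (starRingEnd ℂ) (z j) = (z j)⁻¹ := by
    intro j
    refine eq_inv_of_mul_eq_one_left ?_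
    have : z j * (starRingEnd ℂ) (z j) = 1 := by
      rw [Complex.mul_conj]
      norm_cast
      rw [Complex.normSq_eq_norm_sq, habs j]
      norm_num
    linear_combination this
  set D : Fin n → ℂ := fun j => X j - (starRingEnd ℂ) (X j) with hDdef
  have key : ∀ k : Fin n, ∑ j, z j ^ (k : ℕ) * D j = 0 := by
    intro k
    have hkn : (k : ℕ) < n := k.isLt
    have h1 := hmom (k : ℕ) (by omega) (by exact_mod_cast hkn.le)
    have h2 := hmom (-(k : ℕ) : ℤ) (by omega) (by omega)
    -- the right-hand sides agree
    have hσ : (if (-(k : ℕ) : ℤ) = 0 then (ω : ℂ)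
          else if (-(k : ℕ) : ℤ) = μ ∨ (-(k : ℕ) : ℤ) = -(μ : ℤ) then 1 else 0)
        = (if ((k : ℕ) : ℤ) = 0 then (ω : ℂ)
          else if ((k : ℕ) : ℤ) = μ ∨ ((k : ℕ) : ℤ) = -(μ : ℤ) then 1 else 0) := by
      split_ifs <;> first | rfl | omega
    rw [hσ] at h2
    -- the right-hand side is real
    have hreal : (starRingEnd ℂ) (if ((k : ℕ) : ℤ) = 0 then (ω : ℂ)
          else if ((k : ℕ) : ℤ) = μ ∨ ((k : ℕ) : ℤ) = -(μ : ℤ) then 1 else 0)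
        = (if ((k : ℕ) : ℤ) = 0 then (ω : ℂ)
          else if ((k : ℕ) : ℤ) = μ ∨ ((k : ℕ) : ℤ) = -(μ : ℤ) then 1 else 0) := by
      split_ifs <;> simp
    have h3 := congrArg (starRingEnd ℂ) h2
    rw [map_sum, hreal] at h3
    have h4 : ∀ j, (starRingEnd ℂ) (X j * z j ^ (-(k : ℕ) : ℤ))
        = (starRingEnd ℂ) (X j) * z j ^ (k : ℕ) := by
      intro j
      rw [map_mul, map_zpow₀, hconj j, zpow_neg, inv_zpow, inv_inv, zpow_natCast]
    simp only [h4] at h3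
    have := sub_eq_zero.mpr (h1.trans h3.symm)
    rw [← Finset.sum_sub_distrib] at this
    calc ∑ j, z j ^ (k : ℕ) * D j
        = ∑ j, (X j * z j ^ ((k : ℕ) : ℤ) - (starRingEnd ℂ) (X j) * z j ^ (k : ℕ)) := by
          refine Finset.sum_congr rfl fun j _ => ?_
          rw [zpow_natCast, hDdef]; ring
      _ = 0 := this
  have hD0 : D = 0 := by
    have hdet : (Matrix.vandermonde z).transpose.det ≠ 0 := by
      rw [Matrix.det_transpose, Matrix.det_vandermonde_ne_zero_iff]
      exact hz
    apply Matrix.eq_zero_of_mulVec_eq_zero hdet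
    funext k
    simpa [Matrix.mulVec, Matrix.vandermonde, dotProduct] using key k
  intro j
  have hj : X j - (starRingEnd ℂ) (X j) = 0 := congrFun hD0 j
  have : (starRingEnd ℂ) (X j) = X j := (sub_eq_zero.mp hj).symm
  exact Complex.conj_eq_iff_im.mp this
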